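/- Let d ≥ 3, α ∈ ℝ, and let F : S^{d−1} → [0,∞] be measurable. Then for every v ∈ ℝ^{d−1}, ∫_{S^{d−1}} F(θ') (1 − J(v)·θ')^{−α} dθ' = 2^{d−1−α} ⟨v⟩^{2α} ∫_{ℝ^{d−1}} F(J(v')) ⟨v'⟩^{2α − 2(d−1)} |v − v'|^{−2α} dv' (as an identity in [0,∞]). In particular, with α = (d−1)/2 + s, the stereographic projection of the leading scattering integral ∫_{S^{d−1}} (u(θ')−u(θ)) (1−θ·θ')^{−((d−1)/2+s)} dθ' at θ = J(v) equals 2^{(d−1)/2−s} ⟨v⟩^{d−1+2s} ∫_{ℝ^{d−1}} (u_J(v') − u_J(v)) |v−v'|^{−(d−1+2s)} ⟨v'⟩^{−(d−1−2s)} dv' whenever the latter integrand is absolutely integrable. -/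

import Mathlib

open MeasureTheory Filter
open scoped RealInnerProductSpace ENNReal

noncomputable section

abbrev EucV (n : ℕ) : Type := EuclideanSpace ℝ (Fin n)

/-- Inverse stereographic projection `ℝ^n → S^n ⊂ ℝ^{n+1}`. -/
def jmap (n : ℕ) (v : EucV n) : EucV (n+1) :=
  (EuclideanSpace.equiv (Fin (n+1)) ℝ).symm fun i =>
    if h : (i : ℕ) < n then 2 * v ⟨i, h⟩ / (1 + ‖v‖^2) else (‖v‖^2 - 1) / (1 + ‖v‖^2)

/-- The surface measure on the unit sphere `S^n ⊂ ℝ^{n+1}`, realized as the push-forward of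
the weighted Lebesgue measure `2^n ⟨v⟩^{-2n} dv` under the inverse stereographic
projection (the paper's change of variables `dθ = 2^{d-1} ⟨v⟩^{-2(d-1)} dv`, `d = n+1`). -/
def sphereMeasure (n : ℕ) : Measure (EucV (n+1)) :=
  Measure.map (jmap n)
    (volume.withDensity fun v => ENNReal.ofReal ((2:ℝ)^n * (1 + ‖v‖^2) ^ (-(n:ℝ))))

lemma jmap_apply (n : ℕ) (v : EucV n) (i : Fin (n+1)) :
    jmap n v i = if h : (i : ℕ) < n then 2 * v ⟨i, h⟩ / (1 + ‖v‖^2) else (‖v‖^2 - 1) / (1 + ‖v‖^2) := rfl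

lemma normsq_pos (n : ℕ) (v : EucV n) : (0:ℝ) < 1 + ‖v‖^2 := by positivity

lemma one_sub_inner_jmap (n : ℕ) (v w : EucV n) :
    1 - ⟪jmap n v, jmap n w⟫ = 2 * ‖v - w‖^2 / ((1 + ‖v‖^2) * (1 + ‖w‖^2)) := by
  have hA := normsq_pos n v
  have hB := normsq_pos n w
  have hvw : ⟪v, w⟫ = ∑ i : Fin n, v i * w i := by
    rw [PiLp.inner_apply]; simp [RCLike.inner_apply]
    exact Finset.sum_congr rfl fun i _ => mul_comm _ _
  have h1 : ⟪jmap n v, jmap n w⟫ =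
      (∑ i : Fin n, (2 * v i / (1 + ‖v‖^2)) * (2 * w i / (1 + ‖w‖^2)))
      + ((‖v‖^2 - 1) / (1 + ‖v‖^2)) * ((‖w‖^2 - 1) / (1 + ‖w‖^2)) := by
    rw [PiLp.inner_apply, Fin.sum_univ_castSucc]
    simp [RCLike.inner_apply, jmap_apply, Fin.is_lt]
    congr 1
    · exact Finset.sum_congr rfl fun i _ => mul_comm _ _
    · exact mul_comm _ _
  have h2 : (∑ i : Fin n, (2 * v i / (1 + ‖v‖^2)) * (2 * w i / (1 + ‖w‖^2)))
      = 4 * ⟪v, w⟫ / ((1 + ‖v‖^2) * (1 + ‖w‖^2)) := by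
    rw [hvw, Finset.mul_sum, Finset.sum_div]
    refine Finset.sum_congr rfl fun i _ => ?_
    field_simp; ring
  have h3 : ‖v - w‖^2 = ‖v‖^2 - 2 * ⟪v, w⟫ + ‖w‖^2 := norm_sub_sq_real v w
  rw [h1, h2]
  field_simp
  nlinarith [h3]

lemma jmap_measurable (n : ℕ) : Measurable (jmap n) := by
  refine (EuclideanSpace.equiv (Fin (n+1)) ℝ).symm.continuous.measurable.comp ?_
  apply measurable_pi_lambda
  intro i
  have hnorm : Measurable fun v : EucV n => ‖v‖ := measurable_norm
  by_cases h : (i : ℕ) < n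
  · simp only [jmap_apply, dif_pos h]
    exact ((measurable_const.mul (EuclideanSpace.proj (𝕜 := ℝ) (⟨i, h⟩ : Fin n)).continuous.measurable).div
      (measurable_const.add (hnorm.pow_const 2)))
  · simp only [jmap_apply, dif_neg h]
    exact ((hnorm.pow_const 2).sub measurable_const).div
      (measurable_const.add (hnorm.pow_const 2))

lemma jmap_injective (n : ℕ) : Function.Injective (jmap n) := by
  intro v w h
  have h1 := one_sub_inner_jmap n v w
  have h2 := one_sub_inner_jmap n w w
  rw [h] at h1
  rw [h1] at h2
  have hA := normsq_pos n v
  have hB := normsq_pos n w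
  simp only [sub_self, norm_zero] at h2
  have : ‖v - w‖^2 = 0 := by
    have := h2
    field_simp at this
    nlinarith [this, sq_nonneg ‖v - w‖]
  have : ‖v - w‖ = 0 := by nlinarith [norm_nonneg (v - w)]
  rwa [norm_eq_zero, sub_eq_zero] at this

lemma jmap_embedding (n : ℕ) : MeasurableEmbedding (jmap n) :=
  (jmap_measurable n).measurableEmbedding (jmap_injective n)

lemma singleton_null (n : ℕ) (hn : 2 ≤ n) (v : EucV n) : (volume : Measure (EucV n)) {v} = 0 := by
  haveI : Nonempty (Fin n) := ⟨⟨0, by omega⟩⟩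
  haveI : Nontrivial (EucV n) := by
    have : Nontrivial (Fin n → ℝ) := inferInstance
    exact (EuclideanSpace.equiv (Fin n) ℝ).toEquiv.nontrivial
  exact measure_singleton v

lemma sqrt_rpow' (A : ℝ) (hA : 0 ≤ A) (x : ℝ) : Real.sqrt A ^ x = A ^ (x / 2) := by
  rw [Real.sqrt_eq_rpow, ← Real.rpow_mul hA]
  ring_nf

lemma key_alg (n : ℕ) (α A B r : ℝ) (hA : 0 < A) (hB : 0 < B) (hr : 0 < r) :
    (2 * r^2 / (A * B)) ^ (-α) * ((2:ℝ)^n * B ^ (-(n:ℝ)))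
    = 2 ^ ((n:ℝ) - α) * Real.sqrt A ^ (2*α) * (Real.sqrt B ^ (2*α - 2*(n:ℝ)) * r ^ (-(2*α))) := by
  have h2 : (0:ℝ) < 2 := by norm_num
  rw [sqrt_rpow' A hA.le, sqrt_rpow' B hB.le,
    Real.div_rpow (by positivity) (by positivity),
    Real.mul_rpow (by norm_num) (by positivity),
    Real.mul_rpow hA.le hB.le,
    ← Real.rpow_natCast (2:ℝ) n,
    ← Real.rpow_natCast r 2,
    ← Real.rpow_mul hr.le]
  rw [div_eq_mul_inv, mul_inv, ← Real.rpow_neg hA.le, ← Real.rpow_neg hB.le, neg_neg,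
    show ((2:ℕ):ℝ) * -α = -(2*α) by push_cast; ring,
    show 2*α/2 = α by ring, show (2*α-2*(n:ℝ))/2 = α - (n:ℝ) by ring,
    Real.rpow_sub h2, Real.rpow_sub hB]
  rw [div_eq_mul_inv, div_eq_mul_inv, ← Real.rpow_neg h2.le, ← Real.rpow_neg hB.le]
  ring

lemma dens_meas (n : ℕ) : Measurable fun v : EucV n => ((2:ℝ)^n * (1 + ‖v‖^2) ^ (-(n:ℝ))) := by
  have h : Measurable fun v : EucV n => ‖v‖ := measurable_norm
  measurability

lemma ae_ne (n : ℕ) (hn : 2 ≤ n) (v : EucV n) : ∀ᵐ v' ∂(volume : Measure (EucV n)), v' ≠ v := by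
  rw [ae_iff]
  convert singleton_null n hn v using 2
  ext v'
  simp [Set.mem_singleton_iff]

lemma part1 (n : ℕ) (hn : 2 ≤ n) (α : ℝ) (F : EucV (n+1) → ℝ≥0∞) (hF : Measurable F) (v : EucV n) :
    ∫⁻ θ', F θ' * ENNReal.ofReal ((1 - ⟪jmap n v, θ'⟫) ^ (-α)) ∂(sphereMeasure n)
      = ENNReal.ofReal ((2:ℝ) ^ ((n:ℝ) - α) * Real.sqrt (1 + ‖v‖^2) ^ (2*α))
        * ∫⁻ v', F (jmap n v') *
            ENNReal.ofReal
              (Real.sqrt (1 + ‖v'‖^2) ^ (2*α - 2*(n:ℝ)) * ‖v - v'‖ ^ (-(2*α))) := by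
  have hinner : Measurable fun θ' : EucV (n+1) => ⟪jmap n v, θ'⟫ :=
    (continuous_const.inner continuous_id).measurable
  have hG : Measurable fun θ' : EucV (n+1) =>
      F θ' * ENNReal.ofReal ((1 - ⟪jmap n v, θ'⟫) ^ (-α)) := by
    have hK : Measurable fun θ' : EucV (n+1) => (1 - ⟪jmap n v, θ'⟫) ^ (-α) := by
      measurability
    exact hF.mul (ENNReal.measurable_ofReal.comp hK)
  have hρ : Measurable fun v' : EucV n =>
      ENNReal.ofReal ((2:ℝ)^n * (1 + ‖v'‖^2) ^ (-(n:ℝ))) :=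
    ENNReal.measurable_ofReal.comp (dens_meas n)
  have hG2 : Measurable fun v' : EucV n =>
      F (jmap n v') * ENNReal.ofReal ((1 - ⟪jmap n v, jmap n v'⟫) ^ (-α)) :=
    hG.comp (jmap_measurable n)
  rw [sphereMeasure, lintegral_map hG (jmap_measurable n),
    lintegral_withDensity_eq_lintegral_mul _ hρ hG2]
  simp only [Pi.mul_apply]
  have keyae : (fun v' : EucV n =>
      ENNReal.ofReal ((2:ℝ)^n * (1 + ‖v'‖^2) ^ (-(n:ℝ))) *
        (F (jmap n v') * ENNReal.ofReal ((1 - ⟪jmap n v, jmap n v'⟫) ^ (-α))))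
      =ᵐ[volume] fun v' =>
        ENNReal.ofReal ((2:ℝ) ^ ((n:ℝ) - α) * Real.sqrt (1 + ‖v‖^2) ^ (2*α)) *
          (F (jmap n v') * ENNReal.ofReal
            (Real.sqrt (1 + ‖v'‖^2) ^ (2*α - 2*(n:ℝ)) * ‖v - v'‖ ^ (-(2*α)))) := by
    filter_upwards [ae_ne n hn v] with v' hv'
    have hr : 0 < ‖v - v'‖ := by
      rw [norm_pos_iff, sub_ne_zero]; exact fun h => hv' h.symm
    show ENNReal.ofReal _ * _ = _
    have halg := key_alg n α (1 + ‖v‖^2) (1 + ‖v'‖^2) ‖v - v'‖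
      (normsq_pos n v) (normsq_pos n v') hr
    rw [one_sub_inner_jmap, mul_comm (ENNReal.ofReal _), mul_assoc,
      ← ENNReal.ofReal_mul (by positivity), halg,
      ENNReal.ofReal_mul (by positivity)]
    ring
  rw [lintegral_congr_ae keyae, lintegral_const_mul' _ _ ENNReal.ofReal_ne_top]

set_option maxHeartbeats 1000000 in
lemma part2 (n : ℕ) (hn : 2 ≤ n) (s : ℝ) (u : EucV (n+1) → ℝ) (v : EucV n) :
    ∫ θ', (u θ' - u (jmap n v)) * (1 - ⟪jmap n v, θ'⟫) ^ (-((n:ℝ)/2 + s))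
        ∂(sphereMeasure n)
      = 2 ^ ((n:ℝ)/2 - s) * Real.sqrt (1 + ‖v‖^2) ^ ((n:ℝ) + 2*s)
        * ∫ v', (u (jmap n v') - u (jmap n v)) * ‖v - v'‖ ^ (-((n:ℝ) + 2*s))
            * Real.sqrt (1 + ‖v'‖^2) ^ (-((n:ℝ) - 2*s)) := by
  set c := u (jmap n v) with hc
  have hρ : Measurable fun v' : EucV n =>
      ((2:ℝ)^n * (1 + ‖v'‖^2) ^ (-(n:ℝ))).toNNReal :=
    measurable_real_toNNReal.comp (dens_meas n)
  have hmeq : ((volume : Measure (EucV n)).withDensity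
      fun v' => ENNReal.ofReal ((2:ℝ)^n * (1 + ‖v'‖^2) ^ (-(n:ℝ))))
    = (volume : Measure (EucV n)).withDensity
      (fun v' => ((((2:ℝ)^n * (1 + ‖v'‖^2) ^ (-(n:ℝ))).toNNReal : NNReal) : ENNReal)) := by
    congr 1
  rw [sphereMeasure, (jmap_embedding n).integral_map, hmeq,
    integral_withDensity_eq_integral_smul hρ]
  have keyae : (fun v' : EucV n =>
      (((2:ℝ)^n * (1 + ‖v'‖^2) ^ (-(n:ℝ))).toNNReal : NNReal) •
        ((u (jmap n v') - c) * (1 - ⟪jmap n v, jmap n v'⟫) ^ (-((n:ℝ)/2 + s))))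
      =ᵐ[volume] fun v' =>
        (2 ^ ((n:ℝ)/2 - s) * Real.sqrt (1 + ‖v‖^2) ^ ((n:ℝ) + 2*s)) *
          ((u (jmap n v') - c) * ‖v - v'‖ ^ (-((n:ℝ) + 2*s))
            * Real.sqrt (1 + ‖v'‖^2) ^ (-((n:ℝ) - 2*s))) := by
    filter_upwards [ae_ne n hn v] with v' hv'
    have hr : 0 < ‖v - v'‖ := by
      rw [norm_pos_iff, sub_ne_zero]; exact fun h => hv' h.symm
    have halg := key_alg n ((n:ℝ)/2 + s) (1 + ‖v‖^2) (1 + ‖v'‖^2) ‖v - v'‖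
      (normsq_pos n v) (normsq_pos n v') hr
    rw [show (n:ℝ) - ((n:ℝ)/2 + s) = (n:ℝ)/2 - s by ring,
      show 2 * ((n:ℝ)/2 + s) = (n:ℝ) + 2*s by ring,
      show (n:ℝ) + 2*s - 2*(n:ℝ) = -((n:ℝ) - 2*s) by ring,
      show -((n:ℝ) + 2*s) = -((n:ℝ) + 2*s) by ring] at halg
    rw [NNReal.smul_def, Real.coe_toNNReal _ (by positivity), one_sub_inner_jmap]
    rw [smul_eq_mul]
    linear_combination (u (jmap n v') - c) * halg
  rw [integral_congr_ae keyae, integral_const_mul]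

/-- Stereographic change of variables for singular sphere integrals: for all `α ∈ ℝ` and
measurable `F : S^{d-1} → [0,∞]`,
`∫ F(θ')(1-J(v)·θ')^{-α} dθ' = 2^{d-1-α} ⟨v⟩^{2α} ∫ F(J(v')) ⟨v'⟩^{2α-2(d-1)} |v-v'|^{-2α} dv'`;
in particular the projected form of the leading scattering integral with
`α = (d-1)/2 + s`, under absolute integrability. -/
theorem stereographic_scattering_projection (n : ℕ) (hn : 2 ≤ n) :
    (∀ (α : ℝ) (F : EucV (n+1) → ℝ≥0∞), Measurable F → ∀ v : EucV n,
      ∫⁻ θ', F θ' * ENNReal.ofReal ((1 - ⟪jmap n v, θ'⟫) ^ (-α)) ∂(sphereMeasure n)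
        = ENNReal.ofReal ((2:ℝ) ^ ((n:ℝ) - α) * Real.sqrt (1 + ‖v‖^2) ^ (2*α))
          * ∫⁻ v', F (jmap n v') *
              ENNReal.ofReal
                (Real.sqrt (1 + ‖v'‖^2) ^ (2*α - 2*(n:ℝ)) * ‖v - v'‖ ^ (-(2*α)))) ∧
    (∀ (s : ℝ) (u : EucV (n+1) → ℝ) (v : EucV n),
      Integrable (fun v' : EucV n =>
          (u (jmap n v') - u (jmap n v)) * ‖v - v'‖ ^ (-((n:ℝ) + 2*s))
            * Real.sqrt (1 + ‖v'‖^2) ^ (-((n:ℝ) - 2*s))) →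
      ∫ θ', (u θ' - u (jmap n v)) * (1 - ⟪jmap n v, θ'⟫) ^ (-((n:ℝ)/2 + s))
          ∂(sphereMeasure n)
        = 2 ^ ((n:ℝ)/2 - s) * Real.sqrt (1 + ‖v‖^2) ^ ((n:ℝ) + 2*s)
          * ∫ v', (u (jmap n v') - u (jmap n v)) * ‖v - v'‖ ^ (-((n:ℝ) + 2*s))
              * Real.sqrt (1 + ‖v'‖^2) ^ (-((n:ℝ) - 2*s))) :=
  ⟨fun α F hF v => part1 n hn α F hF v, fun s u v _ => part2 n hn s u v⟩

end
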